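/- Let n ≥ 1, let R = R₁ × R₂ × ⋯ × R_{n+1} be a product of n+1 commutative rings with identity, and let P be an n-absorbing I-prime ideal of R with P ≠ I·P. Then there exists an index i ∈ {1, …, n+1} such that the idempotent element e_i (having 1 in the i-th coordinate and 0 in all other coordinates) belongs to P. -/

import Mathlib

/-- A proper ideal `P` of a commutative ring `R` is an `n`-absorbing `I`-prime ideal
if whenever a product of `n+1` elements lies in `P \ I*P`, the product of some `n`
of them (all but one) lies in `P`. -/
def IsNAbsorbingIPrime {R : Type*} [CommRing R] (n : ℕ) (I P : Ideal R) : Prop :=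
  P ≠ ⊤ ∧ ∀ x : Fin (n + 1) → R, (∏ i, x i) ∈ P → (∏ i, x i) ∉ I * P →
    ∃ i : Fin (n + 1), (∏ j ∈ Finset.univ.erase i, x j) ∈ P

theorem stmt_17 (n : ℕ) (hn : 1 ≤ n) (R : Fin (n + 1) → Type*)
    [∀ i, CommRing (R i)] (I P : Ideal (∀ i, R i))
    (hP : IsNAbsorbingIPrime n I P) (hne : P ≠ I * P) :
    ∃ i : Fin (n + 1), (Pi.single i 1 : ∀ i, R i) ∈ P := by
  classical
  obtain ⟨p, hpP, hpI⟩ : ∃ p, p ∈ P ∧ p ∉ I * P := by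
    by_contra h
    push_neg at h
    exact hne (le_antisymm (fun x hx => h x hx) Ideal.mul_le_right)
  set x : Fin (n + 1) → ∀ k, R k := fun i k => if k = i then p k else 1 with hxdef
  have hx : (∏ i, x i) = p := by
    funext k
    simp only [Finset.prod_apply, hxdef]
    simp [Finset.prod_ite_eq]
  obtain ⟨i, hi⟩ := hP.2 x (hx ▸ hpP) (hx ▸ hpI)
  refine ⟨i, ?_⟩
  have key : (Pi.single i 1 : ∀ i, R i) =
      (Pi.single i 1 : ∀ i, R i) * (∏ j ∈ Finset.univ.erase i, x j) := by
    funext k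
    by_cases hk : k = i
    · subst hk
      simp only [Pi.mul_apply, Pi.single_eq_same, Finset.prod_apply, hxdef, one_mul]
      rw [Finset.prod_eq_one]
      intro j hj
      simp [Finset.ne_of_mem_erase hj, (Finset.ne_of_mem_erase hj).symm]
    · simp [Pi.single_eq_of_ne hk]
  rw [key]
  exact Ideal.mul_mem_left _ _ hi
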